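/- Let L : X × Y → ℝ be convex in x and concave in y on a convex set Z = X × Y in a normed space. Define for r > 0 the normalized duality gap ρ_r(z) = (1/r) · sup over ẑ ∈ Z with ‖ẑ − z‖ ≤ r of (L(x, ŷ) − L(x̂, y)). Then for any fixed z ∈ Z, the map r ↦ ρ_r(z) is monotonically non-increasing on (0, ∞). -/

import Mathlib

open Set

/-- For a convex-concave function `L` on `Z = X ×ˢ Y`, the normalized duality gap
`ρ_r(z) = (1/r) · sup { L(x, ŷ) − L(x̂, y) : ẑ ∈ Z, ‖ẑ − z‖ ≤ r }` is monotonically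
non-increasing in `r` on `(0, ∞)` for every fixed `z ∈ Z`. -/
theorem normalized_duality_gap_antitone
    {E F : Type*} [NormedAddCommGroup E] [NormedSpace ℝ E]
    [NormedAddCommGroup F] [NormedSpace ℝ F]
    (X : Set E) (Y : Set F) (hX : Convex ℝ X) (hY : Convex ℝ Y)
    (L : E → F → ℝ)
    (hcvx : ∀ y ∈ Y, ConvexOn ℝ X (fun x => L x y))
    (hccv : ∀ x ∈ X, ConcaveOn ℝ Y (fun y => L x y))
    (z : E × F) (hz : z ∈ X ×ˢ Y) :
    AntitoneOn
      (fun r : ℝ => (1 / r) *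
        sSup ((fun w : E × F => L z.1 w.2 - L w.1 z.2) ''
          {w | w ∈ X ×ˢ Y ∧ ‖w - z‖ ≤ r}))
      (Set.Ioi (0 : ℝ)) := by
  have hzX : z.1 ∈ X := hz.1
  have hzY : z.2 ∈ Y := hz.2
  set φ : E × F → ℝ := fun w => L z.1 w.2 - L w.1 z.2 with hφ
  have hφz : φ z = 0 := by simp [hφ]
  intro r hr s hs hrs
  simp only [mem_Ioi] at hr hs
  have hzmem : ∀ t : ℝ, 0 ≤ t → z ∈ {w : E × F | w ∈ X ×ˢ Y ∧ ‖w - z‖ ≤ t} := by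
    intro t ht
    exact ⟨hz, by simp [ht]⟩
  set a : ℝ := r / s with ha
  have ha0 : 0 < a := div_pos hr hs
  have ha1 : a ≤ 1 := by
    rw [ha, div_le_one hs]; exact hrs
  set b : ℝ := 1 - a with hb
  have hb0 : 0 ≤ b := by simp [hb]; linarith
  have hab : a + b = 1 := by simp [hb]
  have key : ∀ w ∈ {w : E × F | w ∈ X ×ˢ Y ∧ ‖w - z‖ ≤ s},
      ∃ w' ∈ {w : E × F | w ∈ X ×ˢ Y ∧ ‖w - z‖ ≤ r}, a * φ w ≤ φ w' := by
    intro w hw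
    refine ⟨a • w + b • z,
      ⟨⟨hX hw.1.1 hzX ha0.le hb0 hab, hY hw.1.2 hzY ha0.le hb0 hab⟩, ?_⟩, ?_⟩
    · have heq : a • w + b • z - z = a • (w - z) := by
        rw [hb]; module
      rw [heq, norm_smul, Real.norm_of_nonneg ha0.le]
      calc a * ‖w - z‖ ≤ a * s := by nlinarith [hw.2]
        _ = r := by rw [ha]; field_simp
    · have h1 := (hccv z.1 hzX).2 hw.1.2 hzY ha0.le hb0 hab
      have h2 := (hcvx z.2 hzY).2 hw.1.1 hzX ha0.le hb0 hab
      simp only [smul_eq_mul] at h1 h2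
      simp only [hφ, Prod.fst_add, Prod.snd_add, Prod.smul_fst, Prod.smul_snd]
      linarith
  have hsub : {w : E × F | w ∈ X ×ˢ Y ∧ ‖w - z‖ ≤ r} ⊆
      {w : E × F | w ∈ X ×ˢ Y ∧ ‖w - z‖ ≤ s} := by
    intro w hw; exact ⟨hw.1, hw.2.trans hrs⟩
  by_cases hbdd : BddAbove (φ '' {w : E × F | w ∈ X ×ˢ Y ∧ ‖w - z‖ ≤ s})
  · have hbddr : BddAbove (φ '' {w : E × F | w ∈ X ×ˢ Y ∧ ‖w - z‖ ≤ r}) :=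
      hbdd.mono (image_mono hsub)
    have hSr0 : 0 ≤ sSup (φ '' {w : E × F | w ∈ X ×ˢ Y ∧ ‖w - z‖ ≤ r}) := by
      have := le_csSup hbddr ⟨z, hzmem r hr.le, rfl⟩
      rwa [hφz] at this
    have hmain : sSup (φ '' {w : E × F | w ∈ X ×ˢ Y ∧ ‖w - z‖ ≤ s}) ≤
        sSup (φ '' {w : E × F | w ∈ X ×ˢ Y ∧ ‖w - z‖ ≤ r}) / a := by
      refine csSup_le ⟨φ z, z, hzmem s hs.le, rfl⟩ ?_
      rintro x ⟨w, hw, rfl⟩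
      obtain ⟨w', hw', hle⟩ := key w hw
      have h3 : φ w' ≤ sSup (φ '' {w : E × F | w ∈ X ×ˢ Y ∧ ‖w - z‖ ≤ r}) :=
        le_csSup hbddr ⟨w', hw', rfl⟩
      rw [le_div_iff₀ ha0]
      nlinarith
    set Sr := sSup (φ '' {w : E × F | w ∈ X ×ˢ Y ∧ ‖w - z‖ ≤ r})
    set Ss := sSup (φ '' {w : E × F | w ∈ X ×ˢ Y ∧ ‖w - z‖ ≤ s})
    simp only
    rw [div_mul_eq_mul_div, div_mul_eq_mul_div, one_mul, one_mul,
      div_le_div_iff₀ hs hr]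
    have haa : a = r / s := ha
    rw [haa, div_div_eq_mul_div] at hmain
    have := (le_div_iff₀ hr).1 hmain
    linarith
  · simp only
    rw [Real.sSup_of_not_bddAbove hbdd, mul_zero]
    by_cases hbddr : BddAbove (φ '' {w : E × F | w ∈ X ×ˢ Y ∧ ‖w - z‖ ≤ r})
    · have hSr0 : 0 ≤ sSup (φ '' {w : E × F | w ∈ X ×ˢ Y ∧ ‖w - z‖ ≤ r}) := by
        have := le_csSup hbddr ⟨z, hzmem r hr.le, rfl⟩
        rwa [hφz] at this
      positivity
    · rw [Real.sSup_of_not_bddAbove hbddr, mul_zero]
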